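/- Let φ₁, φ₂, ψ₁, ψ₂ : ℤ² → ℂ and α, β, γ, δ : ℤ² → ℝ satisfy, at every point (n,m) ∈ ℤ², the discrete Dirac equations φ₁(n,m+1) = α·φ₁ + β·ψ₁, ψ₁(n+1,m) = γ·φ₁ + δ·ψ₁, φ₂(n,m+1) = δ·φ₂ + γ·ψ₂, ψ₂(n+1,m) = β·φ₂ + α·ψ₂, together with α·δ − β·γ = 1. Define F, G : ℤ² → ℝ⁴ by F(n,m) = (Re(φ₁φ₂), −Im(φ₁φ₂), Re(φ₁·conj(φ₂)), −Im(φ₁·conj(φ₂))) and G(n,m) by the same formulas with ψ₁, ψ₂ in place of φ₁, φ₂. Then the consistency condition F(n,m+1) − F(n,m) = G(n+1,m) − G(n,m) holds for all (n,m) ∈ ℤ², so that F and G are the edge functions of a discrete surface X : ℤ² → ℝ⁴ (unique up to translation). -/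

import Mathlib

/-- Cumulative sum of `f : ℤ → M` starting at `0`. -/
noncomputable def zcum {M : Type*} [AddCommGroup M] (f : ℤ → M) (n : ℤ) : M :=
  if 0 ≤ n then ∑ i ∈ Finset.range n.toNat, f i
  else - ∑ i ∈ Finset.range (-n).toNat, f (-1 - i)

lemma zcum_zero {M : Type*} [AddCommGroup M] (f : ℤ → M) : zcum f 0 = 0 := by
  simp [zcum]

lemma zcum_step {M : Type*} [AddCommGroup M] (f : ℤ → M) (n : ℤ) :
    zcum f (n + 1) = zcum f n + f n := by
  rcases le_or_gt 0 n with h | h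
  · have h1 : (0:ℤ) ≤ n + 1 := by omega
    have ht : (n + 1).toNat = n.toNat + 1 := by omega
    simp only [zcum, if_pos h, if_pos h1, ht, Finset.sum_range_succ]
    rw [Int.toNat_of_nonneg h]
  · by_cases h1 : n = -1
    · subst h1
      simp [zcum]
    · have h2 : ¬ (0:ℤ) ≤ n + 1 := by omega
      have hk : (-n).toNat = (-(n+1)).toNat + 1 := by omega
      simp only [zcum, if_neg (not_le.2 h), if_neg h2, hk, Finset.sum_range_succ]
      have hc : (-1 : ℤ) - ((-(n+1)).toNat : ℤ) = n := by omega
      rw [hc]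
      abel

lemma zdiff_ext {M : Type*} [AddCommGroup M] (A B : ℤ → M) (h0 : A 0 = B 0)
    (h : ∀ n : ℤ, A (n + 1) - A n = B (n + 1) - B n) : ∀ n : ℤ, A n = B n := by
  intro n
  induction n using Int.induction_on with
  | zero => exact h0
  | succ k ih =>
      have hh := h k
      rw [ih] at hh
      exact sub_left_inj.mp hh
  | pred k ih =>
      have hh := h (-(k:ℤ) - 1)
      have e : (-(k:ℤ) - 1) + 1 = -(k:ℤ) := by ring
      rw [e, ih] at hh
      exact sub_right_inj.mp hh

lemma zcum_sub {M : Type*} [AddCommGroup M] (f g : ℤ → M) (m : ℤ) :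
    zcum (fun j => f j - g j) m = zcum f m - zcum g m := by
  refine zdiff_ext (fun m => zcum (fun j => f j - g j) m)
    (fun m => zcum f m - zcum g m) (by simp [zcum_zero]) (fun n => ?_) m
  simp only [zcum_step]
  abel

lemma zcum_tel {M : Type*} [AddCommGroup M] (h : ℤ → M) (m : ℤ) :
    zcum (fun j => h (j + 1) - h j) m = h m - h 0 := by
  refine zdiff_ext (fun m => zcum (fun j => h (j + 1) - h j) m)
    (fun m => h m - h 0) (by simp [zcum_zero]) (fun n => ?_) m
  simp only [zcum_step]
  abel

/-- Solutions of the discrete Dirac equations in the ℝ^{2,2} case satisfy the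
consistency condition, so the edge functions F, G integrate to a discrete surface
X : ℤ² → ℝ⁴ (unique up to translation). -/
theorem discrete_weierstrass_R22_consistency
    (φ₁ φ₂ ψ₁ ψ₂ : ℤ × ℤ → ℂ) (α β γ δ : ℤ × ℤ → ℝ)
    (hφ₁ : ∀ n m : ℤ, φ₁ (n, m + 1) =
      (α (n, m) : ℂ) * φ₁ (n, m) + (β (n, m) : ℂ) * ψ₁ (n, m))
    (hψ₁ : ∀ n m : ℤ, ψ₁ (n + 1, m) =
      (γ (n, m) : ℂ) * φ₁ (n, m) + (δ (n, m) : ℂ) * ψ₁ (n, m))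
    (hφ₂ : ∀ n m : ℤ, φ₂ (n, m + 1) =
      (δ (n, m) : ℂ) * φ₂ (n, m) + (γ (n, m) : ℂ) * ψ₂ (n, m))
    (hψ₂ : ∀ n m : ℤ, ψ₂ (n + 1, m) =
      (β (n, m) : ℂ) * φ₂ (n, m) + (α (n, m) : ℂ) * ψ₂ (n, m))
    (hdet : ∀ n m : ℤ, α (n, m) * δ (n, m) - β (n, m) * γ (n, m) = 1)
    (F G : ℤ × ℤ → ℝ × ℝ × ℝ × ℝ)
    (hF : ∀ n m : ℤ, F (n, m) =
      ((φ₁ (n, m) * φ₂ (n, m)).re, -(φ₁ (n, m) * φ₂ (n, m)).im,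
       (φ₁ (n, m) * (starRingEnd ℂ) (φ₂ (n, m))).re,
       -(φ₁ (n, m) * (starRingEnd ℂ) (φ₂ (n, m))).im))
    (hG : ∀ n m : ℤ, G (n, m) =
      ((ψ₁ (n, m) * ψ₂ (n, m)).re, -(ψ₁ (n, m) * ψ₂ (n, m)).im,
       (ψ₁ (n, m) * (starRingEnd ℂ) (ψ₂ (n, m))).re,
       -(ψ₁ (n, m) * (starRingEnd ℂ) (ψ₂ (n, m))).im)) :
    (∀ n m : ℤ, F (n, m + 1) - F (n, m) = G (n + 1, m) - G (n, m)) ∧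
    ∃ X : ℤ × ℤ → ℝ × ℝ × ℝ × ℝ, ∀ n m : ℤ,
      F (n, m) = X (n + 1, m) - X (n, m) ∧ G (n, m) = X (n, m + 1) - X (n, m) := by
  have hc : ∀ n m : ℤ, F (n, m + 1) - F (n, m) = G (n + 1, m) - G (n, m) := by
    intro n m
    have hd : ((α (n, m) : ℂ) * δ (n, m) - (β (n, m) : ℂ) * γ (n, m)) = 1 := by
      exact_mod_cast congrArg (fun x : ℝ => (x : ℂ)) (hdet n m)
    have key1 : φ₁ (n, m + 1) * φ₂ (n, m + 1) - φ₁ (n, m) * φ₂ (n, m) =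
        ψ₁ (n + 1, m) * ψ₂ (n + 1, m) - ψ₁ (n, m) * ψ₂ (n, m) := by
      rw [hφ₁ n m, hφ₂ n m, hψ₁ n m, hψ₂ n m]
      linear_combination (φ₁ (n, m) * φ₂ (n, m) - ψ₁ (n, m) * ψ₂ (n, m)) * hd
    have key2 : φ₁ (n, m + 1) * (starRingEnd ℂ) (φ₂ (n, m + 1)) -
        φ₁ (n, m) * (starRingEnd ℂ) (φ₂ (n, m)) =
        ψ₁ (n + 1, m) * (starRingEnd ℂ) (ψ₂ (n + 1, m)) -
        ψ₁ (n, m) * (starRingEnd ℂ) (ψ₂ (n, m)) := by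
      rw [hφ₁ n m, hφ₂ n m, hψ₁ n m, hψ₂ n m]
      simp only [map_add, map_mul, Complex.conj_ofReal]
      linear_combination (φ₁ (n, m) * (starRingEnd ℂ) (φ₂ (n, m)) -
        ψ₁ (n, m) * (starRingEnd ℂ) (ψ₂ (n, m))) * hd
    have r1 := congrArg Complex.re key1
    have i1 := congrArg Complex.im key1
    have r2 := congrArg Complex.re key2
    have i2 := congrArg Complex.im key2
    simp only [Complex.sub_re, Complex.sub_im] at r1 i1 r2 i2
    rw [hF n (m + 1), hF n m, hG (n + 1) m, hG n m]
    simp only [Prod.mk_sub_mk, Prod.mk.injEq]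
    exact ⟨r1, by linarith, r2, by linarith⟩
  refine ⟨hc, ⟨fun p => zcum (fun k => F (k, 0)) p.1 + zcum (fun j => G (p.1, j)) p.2,
    fun n m => ⟨?_, ?_⟩⟩⟩
  · show F (n, m) =
      (zcum (fun k => F (k, 0)) (n + 1) + zcum (fun j => G (n + 1, j)) m) -
      (zcum (fun k => F (k, 0)) n + zcum (fun j => G (n, j)) m)
    have e2 : zcum (fun j => G (n + 1, j)) m - zcum (fun j => G (n, j)) m =
        F (n, m) - F (n, 0) := by
      rw [← zcum_sub]
      have hfg : (fun j => G (n + 1, j) - G (n, j)) =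
          fun j => F (n, j + 1) - F (n, j) := funext fun j => (hc n j).symm
      rw [hfg]; exact zcum_tel (fun j => F (n, j)) m
    rw [zcum_step]
    linear_combination - e2
  · show G (n, m) =
      (zcum (fun k => F (k, 0)) n + zcum (fun j => G (n, j)) (m + 1)) -
      (zcum (fun k => F (k, 0)) n + zcum (fun j => G (n, j)) m)
    rw [zcum_step]
    abel
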